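/- Let x be a positive bounded operator on a Hilbert space H that is locally invertible, i.e. there exists ε > 0 with x ≥ ε·s(x) where s(x) is the support projection of x. If y is an invertible bounded operator on H, then y*xy is also locally invertible: there exists δ > 0 with y*xy ≥ δ·s(y*xy). -/

import Mathlib

open ContinuousLinearMap

variable {H : Type*} [NormedAddCommGroup H] [InnerProductSpace ℂ H] [CompleteSpace H]

/-- The support projection of a bounded operator: the orthogonal projection onto the
closure of its range. -/
noncomputable def suppProj (x : H →L[ℂ] H) : H →L[ℂ] H :=
  haveI : CompleteSpace ((LinearMap.range (x : H →ₗ[ℂ] H)).topologicalClosure : Submodule ℂ H) :=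
    (LinearMap.range (x : H →ₗ[ℂ] H)).isClosed_topologicalClosure.completeSpace_coe
  (LinearMap.range (x : H →ₗ[ℂ] H)).topologicalClosure.subtypeL ∘L
    Submodule.orthogonalProjectionOnto (LinearMap.range (x : H →ₗ[ℂ] H)).topologicalClosure

open scoped InnerProductSpace

omit [CompleteSpace H] in
private lemma inner_orthProj_self (K : Submodule ℂ H) [K.HasOrthogonalProjection] (w : H) :
    ⟪((Submodule.orthogonalProjectionOnto K w : H)), w⟫_ℂ
      = (‖(Submodule.orthogonalProjectionOnto K w : H)‖ : ℂ) ^ 2 := by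
  have h0 : ⟪((Submodule.orthogonalProjectionOnto K w : H)), w - Submodule.orthogonalProjectionOnto K w⟫_ℂ = 0 :=
    Submodule.inner_right_of_mem_orthogonal (Submodule.orthogonalProjectionOnto K w).2
      (Submodule.sub_starProjection_mem_orthogonal (K := K) w)
  have := inner_add_right (𝕜 := ℂ) ((Submodule.orthogonalProjectionOnto K w : H))
    (Submodule.orthogonalProjectionOnto K w : H) (w - Submodule.orthogonalProjectionOnto K w)
  rw [add_sub_cancel] at this
  rw [this, h0, add_zero, inner_self_eq_norm_sq_to_K]
  norm_cast

omit [CompleteSpace H] in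
private lemma re_inner_smul_orthProj (r : ℝ) (K : Submodule ℂ H) [K.HasOrthogonalProjection]
    (w : H) : RCLike.re ⟪r • (Submodule.orthogonalProjectionOnto K w : H), w⟫_ℂ
      = r * ‖(Submodule.orthogonalProjectionOnto K w : H)‖ ^ 2 := by
  rw [RCLike.real_smul_eq_coe_smul (K := ℂ), inner_smul_real_left, inner_orthProj_self]
  rw [RCLike.smul_re]
  norm_cast

private lemma suppProj_apply (x : H →L[ℂ] H) (w : H) :
    haveI : CompleteSpace ((LinearMap.range (x : H →ₗ[ℂ] H)).topologicalClosure : Submodule ℂ H) :=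
      (LinearMap.range (x : H →ₗ[ℂ] H)).isClosed_topologicalClosure.completeSpace_coe
    suppProj x w = (Submodule.orthogonalProjectionOnto (LinearMap.range (x : H →ₗ[ℂ] H)).topologicalClosure w : H) := rfl

private lemma suppProj_isSelfAdjoint (x : H →L[ℂ] H) : IsSelfAdjoint (suppProj x) := by
  haveI : CompleteSpace ((LinearMap.range (x : H →ₗ[ℂ] H)).topologicalClosure : Submodule ℂ H) :=
    (LinearMap.range (x : H →ₗ[ℂ] H)).isClosed_topologicalClosure.completeSpace_coe
  exact isSelfAdjoint_starProjection (LinearMap.range (x : H →ₗ[ℂ] H)).topologicalClosure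

set_option maxHeartbeats 1000000 in
/-- local invertibility (`x ≥ ε·s(x)` for some `ε > 0`) is stable under
conjugation by an invertible operator. -/
theorem locally_invertible_conj (x y : H →L[ℂ] H) (hx : x.IsPositive)
    (hloc : ∃ ε : ℝ, 0 < ε ∧ (x - ε • suppProj x).IsPositive) (hy : IsUnit y) :
    ∃ δ : ℝ, 0 < δ ∧
      (((ContinuousLinearMap.adjoint y) ∘L x ∘L y) -
        δ • suppProj ((ContinuousLinearMap.adjoint y) ∘L x ∘L y)).IsPositive := by
  obtain ⟨ε, hε, hpos⟩ := hloc
  obtain ⟨u, rfl⟩ := hy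
  set y : H →L[ℂ] H := (u : H →L[ℂ] H) with hydef
  set yi : H →L[ℂ] H := ((u⁻¹ : (H →L[ℂ] H)ˣ) : H →L[ℂ] H) with hyidef
  set z : H →L[ℂ] H := (ContinuousLinearMap.adjoint y) ∘L x ∘L y with hzdef
  set N := (LinearMap.range (x : H →ₗ[ℂ] H)).topologicalClosure with hN
  set M := (LinearMap.range (z : H →ₗ[ℂ] H)).topologicalClosure with hM
  haveI : CompleteSpace (N : Submodule ℂ H) :=
    (LinearMap.range (x : H →ₗ[ℂ] H)).isClosed_topologicalClosure.completeSpace_coe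
  haveI : CompleteSpace (M : Submodule ℂ H) :=
    (LinearMap.range (z : H →ₗ[ℂ] H)).isClosed_topologicalClosure.completeSpace_coe
  set C : ℝ := ‖yi‖ with hC
  -- step 1: lower bound for x
  have hxlow : ∀ w : H, ε * ‖(Submodule.orthogonalProjectionOnto N w : H)‖ ^ 2 ≤
      RCLike.re ⟪x w, w⟫_ℂ := by
    intro w
    have h1 := hpos.2 w
    rw [ContinuousLinearMap.reApplyInnerSelf_apply, ContinuousLinearMap.sub_apply,
      ContinuousLinearMap.smul_apply, inner_sub_left, map_sub, suppProj_apply,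
      re_inner_smul_orthProj] at h1
    linarith
  -- basic algebra with the unit
  have hmul1 : y * yi = 1 := by rw [hydef, hyidef]; exact_mod_cast u.mul_inv
  have hzstar : z = star y * x * y := by
    rw [hzdef, ContinuousLinearMap.star_eq_adjoint]; rfl
  have hzadj : ∀ w v : H, ⟪z w, v⟫_ℂ = ⟪x (y w), y v⟫_ℂ := by
    intro w v
    simp only [hzdef, ContinuousLinearMap.comp_apply]
    exact ContinuousLinearMap.adjoint_inner_left y v (x (y w))
  -- step 2: key norm bound
  have hbound : ∀ v : H, ‖(Submodule.orthogonalProjectionOnto M v : H)‖ ≤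
      C * ‖(Submodule.orthogonalProjectionOnto N (y v) : H)‖ := by
    intro v
    set p : H := (Submodule.orthogonalProjectionOnto M v : H) with hp
    set c : ℝ := C * ‖(Submodule.orthogonalProjectionOnto N (y v) : H)‖ with hc
    have hS : IsClosed {m : H | ‖⟪m, v⟫_ℂ‖ ≤ c * ‖m‖} := by
      apply isClosed_le
      · exact (Continuous.inner continuous_id continuous_const).norm
      · exact continuous_const.mul continuous_norm
    have hrange : (Set.range z : Set H) ⊆ {m : H | ‖⟪m, v⟫_ℂ‖ ≤ c * ‖m‖} := by
      rintro _ ⟨w, rfl⟩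
      have h1 : ⟪z w, v⟫_ℂ = ⟪x (y w), (Submodule.orthogonalProjectionOnto N (y v) : H)⟫_ℂ := by
        rw [hzadj]
        have h2 : ⟪x (y w), y v - (Submodule.orthogonalProjectionOnto N (y v) : H)⟫_ℂ = 0 :=
          Submodule.inner_right_of_mem_orthogonal
            (Submodule.le_topologicalClosure _ (LinearMap.mem_range_self _ (y w)))
            (Submodule.sub_starProjection_mem_orthogonal (K := N) (y v))
        have h3 := inner_add_right (𝕜 := ℂ) (x (y w))
          (Submodule.orthogonalProjectionOnto N (y v) : H) (y v - Submodule.orthogonalProjectionOnto N (y v))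
        rw [add_sub_cancel] at h3
        rw [h3, h2, add_zero]
      have h4 : x (y w) = (star yi) (z w) := by
        have hst : star yi * star y = 1 := by
          rw [← star_mul, hmul1, star_one]
        have hzw : z w = (star y) (x (y w)) := by
          rw [hzstar]; rfl
        calc x (y w) = (star yi * star y) (x (y w)) := by
              rw [hst, ContinuousLinearMap.one_apply]
          _ = (star yi) (z w) := by rw [hzw]; rfl
      have h5 : ‖x (y w)‖ ≤ C * ‖z w‖ := by
        rw [h4]
        calc ‖(star yi) (z w)‖ ≤ ‖star yi‖ * ‖z w‖ := le_opNorm _ _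
          _ = C * ‖z w‖ := by rw [norm_star]
      calc ‖⟪z w, v⟫_ℂ‖ = ‖⟪x (y w), (Submodule.orthogonalProjectionOnto N (y v) : H)⟫_ℂ‖ := by rw [h1]
        _ ≤ ‖x (y w)‖ * ‖(Submodule.orthogonalProjectionOnto N (y v) : H)‖ := norm_inner_le_norm _ _
        _ ≤ (C * ‖z w‖) * ‖(Submodule.orthogonalProjectionOnto N (y v) : H)‖ :=
            mul_le_mul_of_nonneg_right h5 (norm_nonneg _)
        _ = c * ‖z w‖ := by ring
    have hpmem : p ∈ closure (Set.range z : Set H) := by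
      have : p ∈ (M : Set H) := (Submodule.orthogonalProjectionOnto M v).2
      rwa [hM, Submodule.topologicalClosure_coe, LinearMap.coe_range] at this
    have hpS : ‖⟪p, v⟫_ℂ‖ ≤ c * ‖p‖ := closure_minimal hrange hS hpmem
    have hps : ⟪p, v⟫_ℂ = (‖p‖ : ℂ) ^ 2 := inner_orthProj_self M v
    rw [hps] at hpS
    have hsq : ‖p‖ ^ 2 ≤ c * ‖p‖ := by
      have hn : ‖((‖p‖ : ℂ)) ^ 2‖ = ‖p‖ ^ 2 := by
        rw [norm_pow, Complex.norm_real, Real.norm_eq_abs, abs_norm]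
      linarith [hn ▸ hpS]
    rcases eq_or_lt_of_le (norm_nonneg p) with h0 | h0
    · rw [← h0]
      have : (0:ℝ) ≤ C := norm_nonneg _
      positivity
    · nlinarith
  -- conclusion
  have hCnn : (0:ℝ) ≤ C := norm_nonneg _
  refine ⟨ε / (C ^ 2 + 1), by positivity, ?_⟩
  constructor
  · have hzsa : IsSelfAdjoint z := by
      rw [hzstar]
      rw [isSelfAdjoint_iff]
      simp only [star_mul, star_star, hx.isSelfAdjoint.star_eq, mul_assoc]
    exact ContinuousLinearMap.isSelfAdjoint_iff_isSymmetric.mp <| hzsa.sub ((isSelfAdjoint_iff.mpr (star_trivial (ε / (C ^ 2 + 1)))).smul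
      (suppProj_isSelfAdjoint z))
  · intro v
    rw [ContinuousLinearMap.reApplyInnerSelf_apply, ContinuousLinearMap.sub_apply,
      ContinuousLinearMap.smul_apply, inner_sub_left, map_sub, suppProj_apply,
      re_inner_smul_orthProj]
    have hzv : RCLike.re ⟪z v, v⟫_ℂ = RCLike.re ⟪x (y v), y v⟫_ℂ := by rw [hzadj]
    have h1 := hxlow (y v)
    have h3 : ‖(Submodule.orthogonalProjectionOnto M v : H)‖ ^ 2 ≤
        C ^ 2 * ‖(Submodule.orthogonalProjectionOnto N (y v) : H)‖ ^ 2 := by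
      rw [← mul_pow]
      exact pow_le_pow_left₀ (norm_nonneg _) (hbound v) 2
    have hd : (0:ℝ) < C ^ 2 + 1 := by positivity
    have key : ε / (C ^ 2 + 1) * ‖(Submodule.orthogonalProjectionOnto M v : H)‖ ^ 2 ≤
        ε * ‖(Submodule.orthogonalProjectionOnto N (y v) : H)‖ ^ 2 := by
      calc ε / (C ^ 2 + 1) * ‖(Submodule.orthogonalProjectionOnto M v : H)‖ ^ 2
          ≤ ε / (C ^ 2 + 1) * (C ^ 2 * ‖(Submodule.orthogonalProjectionOnto N (y v) : H)‖ ^ 2) :=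
            mul_le_mul_of_nonneg_left h3 (by positivity)
        _ ≤ ε * ‖(Submodule.orthogonalProjectionOnto N (y v) : H)‖ ^ 2 := by
            rw [div_mul_eq_mul_div, div_le_iff₀ hd]
            nlinarith [sq_nonneg (‖(Submodule.orthogonalProjectionOnto N (y v) : H)‖), hε.le]
    linarith
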